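/- Let α, β, γ, δ ∈ ℂ, let δ₁ ∈ ℂ satisfy δ₁² = −δ, and set β₁ = β − 2δ₁. Let U ⊆ ℂ ∖ {0} be open and let y : U → ℂ be holomorphic with y(x) ≠ 0 for all x ∈ U, satisfying P_III on U. Define z : U → ℂ by z = (2/y²)(y′ − δ₁ + y/x). Then the pair (y, z) satisfies the P_III system on U, i.e. y′ = y²z/2 + δ₁ − y/x and z′ = −y z²/2 + 2γ y + (2/x)(α + β₁/y²) at every point of U. -/

import Mathlib

set_option maxHeartbeats 1000000


/-- If `y` is a nowhere-zero holomorphic solution of the third Painlevé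
equation on an open set `U ⊆ ℂ ∖ {0}`, and `z = (2/y²)(y′ − δ₁ + y/x)`, then `(y, z)`
satisfies the P_III system on `U`. -/
theorem pIII_to_system (α β γ δ δ₁ β₁ : ℂ)
    (hδ₁ : δ₁ ^ 2 = -δ) (hβ₁ : β₁ = β - 2 * δ₁)
    (U : Set ℂ) (hU : IsOpen U) (hU0 : (0 : ℂ) ∉ U)
    (y : ℂ → ℂ) (hy : DifferentiableOn ℂ y U)
    (hy0 : ∀ x ∈ U, y x ≠ 0)
    (hP3 : ∀ x ∈ U, deriv (deriv y) x =
      (deriv y x) ^ 2 / y x - deriv y x / x + (α * (y x) ^ 2 + β) / x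
        + γ * (y x) ^ 3 + δ / y x)
    (z : ℂ → ℂ)
    (hz : ∀ x ∈ U, z x = (2 / (y x) ^ 2) * (deriv y x - δ₁ + y x / x)) :
    ∀ x ∈ U,
      deriv y x = (y x) ^ 2 * z x / 2 + δ₁ - y x / x ∧
      deriv z x = -(y x * (z x) ^ 2) / 2 + 2 * γ * y x
        + (2 / x) * (α + β₁ / (y x) ^ 2) := by
  intro x hx
  have hY : y x ≠ 0 := hy0 x hx
  have hx0 : x ≠ 0 := fun h => hU0 (h ▸ hx)
  have hyA : AnalyticOnNhd ℂ y U := hy.analyticOnNhd hU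
  have hyd : DifferentiableAt ℂ y x := (hyA x hx).differentiableAt
  have h1 : HasDerivAt y (deriv y x) x := hyd.hasDerivAt
  have hy'A : AnalyticOnNhd ℂ (deriv y) U := hyA.deriv
  have h2 : HasDerivAt (deriv y) (deriv (deriv y) x) x :=
    (hy'A x hx).differentiableAt.hasDerivAt
  constructor
  · rw [hz x hx]
    field_simp [hY, hx0]
    ring
  · -- z agrees with the formula near x
    have heq : z =ᶠ[nhds x] fun t => (2 / (y t) ^ 2) * (deriv y t - δ₁ + y t / t) :=
      Filter.eventuallyEq_of_mem (hU.mem_nhds hx) (fun t ht => hz t ht)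
    have hA : HasDerivAt (fun t => (2 : ℂ) / (y t) ^ 2)
        ((0 * (y x) ^ 2 - 2 * ((2 : ℕ) * y x ^ (2 - 1) * deriv y x)) / ((y x) ^ 2) ^ 2) x :=
      (hasDerivAt_const x (2 : ℂ)).div (h1.pow 2) (pow_ne_zero 2 hY)
    have hB : HasDerivAt (fun t => deriv y t - δ₁ + y t / t)
        (deriv (deriv y) x + (deriv y x * x - y x * 1) / x ^ 2) x :=
      (h2.sub_const δ₁).add (h1.div (hasDerivAt_id x) hx0)
    have hg : HasDerivAt (fun t => (2 / (y t) ^ 2) * (deriv y t - δ₁ + y t / t))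
        ((0 * (y x) ^ 2 - 2 * ((2 : ℕ) * y x ^ (2 - 1) * deriv y x)) / ((y x) ^ 2) ^ 2
          * (deriv y x - δ₁ + y x / x)
          + (2 / (y x) ^ 2) * (deriv (deriv y) x + (deriv y x * x - y x * 1) / x ^ 2)) x :=
      hA.mul hB
    rw [heq.deriv_eq, hg.deriv, hz x hx, hP3 x hx, hβ₁]
    have hδ : δ = -δ₁ ^ 2 := by rw [hδ₁]; ring
    rw [hδ]
    push_cast
    norm_num
    field_simp [hY, hx0]
    ring_nf
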